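/- Let (ξ_j)_{j≥1} be i.i.d. exponential random variables with rate 1 and let Γ_k = ξ_1 + … + ξ_k (the jump times of a standard homogeneous Poisson process on the half real line). Let 0 < δ < 1/2. Then for every ε > 0 there exists a constant B > 0 such that with probability at least 1 − ε, sup_{x ∈ (0,∞)} x^{−(1/2+δ)} | #{j ≥ 1 : Γ_j ≤ x} − x | ≤ B. -/

import Mathlib

open MeasureTheory ProbabilityTheory Real Filter
open scoped ENNReal NNReal

noncomputable section

set_option linter.unusedSectionVars false

namespace PoissonFluct

lemma expMeasure_eq :
    expMeasure 1 = MeasureTheory.volume.withDensity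
      (fun x => ENNReal.ofReal (exponentialPDFReal 1 x)) := rfl

lemma pdf_indicator (s : ℝ) (x : ℝ) :
    Real.exp (s * x) * exponentialPDFReal 1 x
      = Set.indicator (Set.Ici (0:ℝ)) (fun y => Real.exp (-(1 - s) * y)) x := by
  rw [exponentialPDFReal, gammaPDFReal]
  by_cases hx : 0 ≤ x
  · simp only [if_pos hx, Set.indicator_of_mem (Set.mem_Ici.2 hx), Real.Gamma_one,
      Real.rpow_one, sub_self, Real.rpow_zero, one_mul, mul_one, div_one]
    rw [← Real.exp_add]
    ring_nf
  · simp [if_neg hx, Set.indicator_of_notMem (fun h => hx (Set.mem_Ici.1 h))]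

lemma integrableOn_target {s : ℝ} (hs : s < 1) :
    IntegrableOn (fun y => Real.exp (-(1 - s) * y)) (Set.Ici (0:ℝ)) := by
  exact Iff.mpr integrableOn_Ici_iff_integrableOn_Ioi (exp_neg_integrableOn_Ioi 0 (by linarith))

lemma integrable_exp_expMeasure {s : ℝ} (hs : s < 1) :
    Integrable (fun x => Real.exp (s * x)) (expMeasure 1) := by
  rw [expMeasure_eq, integrable_withDensity_iff
      ((measurable_exponentialPDFReal 1).ennreal_ofReal)
      (Filter.Eventually.of_forall fun x => ENNReal.ofReal_lt_top)]
  have h : (fun x => Real.exp (s * x) * (ENNReal.ofReal (exponentialPDFReal 1 x)).toReal)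
      = Set.indicator (Set.Ici (0:ℝ)) (fun y => Real.exp (-(1 - s) * y)) := by
    funext x
    rw [ENNReal.toReal_ofReal (exponentialPDFReal_nonneg one_pos x)]
    exact pdf_indicator s x
  rw [h, integrable_indicator_iff measurableSet_Ici]
  exact integrableOn_target hs

lemma integral_exp_expMeasure {s : ℝ} (hs : s < 1) :
    ∫ x, Real.exp (s * x) ∂(expMeasure 1) = (1 - s)⁻¹ := by
  have hd : (fun x : ℝ => ENNReal.ofReal (exponentialPDFReal 1 x))
      = (fun x : ℝ => (((exponentialPDFReal 1 x).toNNReal : ℝ≥0) : ℝ≥0∞)) := rfl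
  rw [expMeasure_eq, hd, integral_withDensity_eq_integral_smul
      ((measurable_exponentialPDFReal 1).real_toNNReal) _]
  have h : (fun x => ((exponentialPDFReal 1 x).toNNReal : ℝ≥0) • Real.exp (s * x))
      = Set.indicator (Set.Ici (0:ℝ)) (fun y => Real.exp (-(1 - s) * y)) := by
    funext x
    rw [NNReal.smul_def, smul_eq_mul,
      Real.coe_toNNReal _ (exponentialPDFReal_nonneg one_pos x), mul_comm]
    exact pdf_indicator s x
  rw [h, integral_indicator measurableSet_Ici, integral_Ici_eq_integral_Ioi]
  have hb : 0 < 1 - s := by linarith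
  have h2 := integral_comp_mul_left_Ioi (fun y => Real.exp (-y)) 0 hb
  simp only [mul_zero, smul_eq_mul, integral_exp_neg_Ioi, neg_zero, Real.exp_zero, mul_one,
    neg_mul] at h2 ⊢
  rw [h2]


lemma log_aux_upper {l : ℝ} (h0 : 0 < l) (h1 : l ≤ 1/4) :
    -Real.log (1 - l) ≤ l + 2 * l ^ 2 := by
  have h2 : (0:ℝ) < 1 - l := by linarith
  have h3 := Real.log_le_sub_one_of_pos (inv_pos.2 h2)
  rw [Real.log_inv] at h3
  have h4 : (1 - l)⁻¹ ≤ 1 + l + 2 * l ^ 2 := by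
    rw [inv_eq_one_div, div_le_iff₀ h2]; nlinarith
  linarith

lemma log_aux_lower {l : ℝ} (h0 : 0 ≤ l) :
    l - Real.log (1 + l) ≤ l ^ 2 := by
  have h2 : (0:ℝ) < 1 + l := by linarith
  have h3 := Real.log_le_sub_one_of_pos (inv_pos.2 h2)
  rw [Real.log_inv] at h3
  have h4 : (1 + l)⁻¹ ≤ 1 - l + l ^ 2 := by
    rw [inv_eq_one_div, div_le_iff₀ h2]; nlinarith
  linarith

lemma chernoff_num_upper {K t : ℝ} {k : ℕ} (hK : 1 ≤ K) (hkK : (k:ℝ) = K)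
    (ht : 0 < t) (htK : t ≤ K) :
    Real.exp (-(t/(4*K)) * (K + t)) * ((1 - t/(4*K))⁻¹) ^ k
      ≤ Real.exp (-(t^2/(8*K))) := by
  have hK0 : (0:ℝ) < K := lt_of_lt_of_le one_pos hK
  set l := t/(4*K) with hl
  have hl0 : 0 < l := div_pos ht (by positivity)
  have hl4 : l ≤ 1/4 := by rw [hl, div_le_iff₀ (by positivity)]; linarith
  have h2 : (0:ℝ) < 1 - l := by linarith
  have hlog : -Real.log (1 - l) ≤ l + 2 * l ^ 2 := log_aux_upper hl0 hl4
  have hinv : ((1 - l)⁻¹) ^ k = Real.exp (K * (-Real.log (1 - l))) := by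
    rw [← Real.exp_log (inv_pos.2 h2), ← Real.exp_nat_mul, Real.log_inv, hkK]
  rw [hinv, ← Real.exp_add, Real.exp_le_exp]
  have hKl : K * (-Real.log (1 - l)) ≤ K * (l + 2 * l ^ 2) :=
    mul_le_mul_of_nonneg_left hlog hK0.le
  have hlt : l * (4 * K) = t := div_mul_cancel₀ t (by positivity)
  have key : -l * (K + t) + K * (l + 2 * l ^ 2) = -(t^2/(8*K)) := by
    rw [← hlt]; field_simp; ring
  linarith

lemma chernoff_num_lower {K t : ℝ} {k : ℕ} (hK : 1 ≤ K) (hkK : (k:ℝ) = K)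
    (ht : 0 < t) :
    Real.exp ((t/(2*K)) * (K - t)) * ((1 + t/(2*K))⁻¹) ^ k
      ≤ Real.exp (-(t^2/(8*K))) := by
  have hK0 : (0:ℝ) < K := lt_of_lt_of_le one_pos hK
  set l := t/(2*K) with hl
  have hl0 : 0 < l := div_pos ht (by positivity)
  have h2 : (0:ℝ) < 1 + l := by linarith
  have hlog : l - Real.log (1 + l) ≤ l ^ 2 := log_aux_lower hl0.le
  have hinv : ((1 + l)⁻¹) ^ k = Real.exp (K * (-Real.log (1 + l))) := by
    rw [← Real.exp_log (inv_pos.2 h2), ← Real.exp_nat_mul, Real.log_inv, hkK]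
  rw [hinv, ← Real.exp_add, Real.exp_le_exp]
  have hKl : K * (-Real.log (1 + l)) ≤ K * (l ^ 2 - l) := by
    have := mul_le_mul_of_nonneg_left hlog hK0.le
    nlinarith
  have hlt : l * (2 * K) = t := div_mul_cancel₀ t (by positivity)
  have key : l * (K - t) + K * (l ^ 2 - l) = -(t^2/(4*K)) := by
    rw [← hlt]; field_simp; ring
  have h8 : t^2/(8*K) ≤ t^2/(4*K) := by
    apply div_le_div_of_nonneg_left (by positivity) (by positivity) (by linarith)
  linarith


variable {Ω : Type*} [MeasurableSpace Ω] {μ : Measure Ω} [IsProbabilityMeasure μ]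

lemma integrable_exp_xi {ξ : Ω → ℝ} (hm : Measurable ξ) (hx : Measure.map ξ μ = expMeasure 1)
    {s : ℝ} (hs : s < 1) : Integrable (fun ω => Real.exp (s * ξ ω)) μ := by
  have h : Integrable (fun x => Real.exp (s * x)) (Measure.map ξ μ) :=
    hx ▸ integrable_exp_expMeasure hs
  have hsm : AEStronglyMeasurable (fun x : ℝ => Real.exp (s * x)) (Measure.map ξ μ) :=
    (Measurable.aestronglyMeasurable (Real.measurable_exp.comp (measurable_const.mul measurable_id)))
  rwa [integrable_map_measure hsm hm.aemeasurable] at h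

lemma mgf_xi {ξ : Ω → ℝ} (hm : Measurable ξ) (hx : Measure.map ξ μ = expMeasure 1)
    {s : ℝ} (hs : s < 1) : mgf ξ μ s = (1 - s)⁻¹ := by
  rw [mgf]
  show ∫ ω, (fun x => Real.exp (s * x)) (ξ ω) ∂μ = (1 - s)⁻¹
  have hsm : AEStronglyMeasurable (fun x : ℝ => Real.exp (s * x)) (Measure.map ξ μ) :=
    (Measurable.aestronglyMeasurable (Real.measurable_exp.comp (measurable_const.mul measurable_id)))
  rw [← integral_map hm.aemeasurable hsm, hx, integral_exp_expMeasure hs]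

lemma mgf_sum_xi {ξ : ℕ → Ω → ℝ} (hmeas : ∀ j, Measurable (ξ j))
    (hindep : iIndepFun ξ μ)
    (hexp : ∀ j, Measure.map (ξ j) μ = expMeasure 1)
    {s : ℝ} (hs : s < 1) (k : ℕ) :
    mgf (∑ j ∈ Finset.range k, ξ j) μ s = ((1 - s)⁻¹) ^ k := by
  rw [hindep.mgf_sum hmeas]
  rw [Finset.prod_congr rfl (fun j _ => mgf_xi (hmeas j) (hexp j) hs),
    Finset.prod_const, Finset.card_range]

/-- Chernoff tail bound for `Γ_k`. -/
lemma tail_bound {ξ : ℕ → Ω → ℝ} (hmeas : ∀ j, Measurable (ξ j))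
    (hindep : iIndepFun ξ μ)
    (hexp : ∀ j, Measure.map (ξ j) μ = expMeasure 1)
    {p : ℝ} (hp1 : p ≤ 1) {k : ℕ} (hk : 1 ≤ k) :
    μ {ω | ¬ |(∑ j ∈ Finset.range k, ξ j ω) - (k:ℝ)| ≤ (k:ℝ)^p}
      ≤ ENNReal.ofReal (2 * Real.exp (-(((k:ℝ)^p)^2/(8*(k:ℝ))))) := by
  set K := (k:ℝ) with hKdef
  have hK : 1 ≤ K := by rw [hKdef]; exact_mod_cast hk
  have hK0 : (0:ℝ) < K := lt_of_lt_of_le one_pos hK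
  set t := K ^ p with htdef
  have ht : 0 < t := Real.rpow_pos_of_pos hK0 p
  have htK : t ≤ K := by
    calc K ^ p ≤ K ^ (1:ℝ) := Real.rpow_le_rpow_of_exponent_le hK hp1
    _ = K := Real.rpow_one K
  set X : Ω → ℝ := ∑ j ∈ Finset.range k, ξ j with hX
  have hXapp : ∀ ω, X ω = ∑ j ∈ Finset.range k, ξ j ω := fun ω => by
    rw [hX]; exact Finset.sum_apply ω (Finset.range k) ξ
  have hsub : {ω | ¬ |(∑ j ∈ Finset.range k, ξ j ω) - K| ≤ t}
      ⊆ {ω | K + t ≤ X ω} ∪ {ω | X ω ≤ K - t} := by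
    intro ω hω
    simp only [Set.mem_setOf_eq, abs_le, not_and_or, not_le] at hω
    rcases hω with h | h
    · right; rw [Set.mem_setOf_eq, hXapp]; linarith
    · left; rw [Set.mem_setOf_eq, hXapp]; linarith
  refine le_trans (le_trans (measure_mono hsub) (measure_union_le _ _)) ?_
  have e2 : (2 : ℝ) * Real.exp (-(t^2/(8*K)))
      = Real.exp (-(t^2/(8*K))) + Real.exp (-(t^2/(8*K))) := by ring
  rw [e2, ENNReal.ofReal_add (Real.exp_nonneg _) (Real.exp_nonneg _)]
  have hup : μ {ω | K + t ≤ X ω} ≤ ENNReal.ofReal (Real.exp (-(t^2/(8*K)))) := by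
    rw [ENNReal.le_ofReal_iff_toReal_le (measure_ne_top μ _) (Real.exp_nonneg _)]
    have hl1 : t/(4*K) < 1 := by
      rw [div_lt_one (by positivity)]; linarith
    have h_int : Integrable (fun ω => Real.exp (t/(4*K) * X ω)) μ :=
      hindep.integrable_exp_mul_sum hmeas
        (fun j _ => integrable_exp_xi (hmeas j) (hexp j) hl1)
    have hch := measure_ge_le_exp_mul_mgf (μ := μ) (X := X) (K + t)
      (le_of_lt (div_pos ht (by positivity))) h_int
    rw [mgf_sum_xi hmeas hindep hexp hl1 k] at hch
    exact le_trans hch (chernoff_num_upper hK rfl ht htK)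
  have hlo : μ {ω | X ω ≤ K - t} ≤ ENNReal.ofReal (Real.exp (-(t^2/(8*K)))) := by
    rw [ENNReal.le_ofReal_iff_toReal_le (measure_ne_top μ _) (Real.exp_nonneg _)]
    have hl1 : -(t/(2*K)) < 1 := by
      have : 0 < t/(2*K) := div_pos ht (by positivity)
      linarith
    have h_int : Integrable (fun ω => Real.exp (-(t/(2*K)) * X ω)) μ :=
      hindep.integrable_exp_mul_sum hmeas
        (fun j _ => integrable_exp_xi (hmeas j) (hexp j) hl1)
    have hch := measure_le_le_exp_mul_mgf (μ := μ) (X := X) (K - t)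
      (neg_nonpos.mpr (le_of_lt (div_pos ht (by positivity)))) h_int
    rw [mgf_sum_xi hmeas hindep hexp hl1 k] at hch
    have heq : (1 - -(t/(2*K)))⁻¹ = (1 + t/(2*K))⁻¹ := by rw [sub_neg_eq_add]
    rw [heq, neg_neg] at hch
    exact le_trans hch (chernoff_num_lower hK rfl ht)
  exact add_le_add hup hlo

/-- summability of the tail bounds -/
lemma summable_tail {ρ : ℝ} (hρ : 0 < ρ) {c : ℝ} (hc : 0 < c) :
    Summable (fun k : ℕ => Real.exp (-((k:ℝ)^ρ / c))) := by
  have hlog := (isLittleO_log_rpow_atTop hρ).def (show (0:ℝ) < 1/(2*c) by positivity)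
  have hev : ∀ᶠ x : ℝ in atTop, ‖Real.log x‖ ≤ 1/(2*c) * ‖x ^ ρ‖ := hlog
  obtain ⟨N₀, hN₀⟩ := (tendsto_natCast_atTop_atTop (R := ℝ)).eventually hev |>.exists_forall_of_atTop
  set N := max N₀ 1 with hN
  have key : ∀ m : ℕ, N ≤ m → Real.exp (-((m:ℝ)^ρ / c)) ≤ (((m:ℝ))^(2:ℝ))⁻¹ := by
    intro m hm
    have hm1 : (1:ℝ) ≤ (m:ℝ) := by
      have : 1 ≤ m := le_trans (le_max_right _ _) hm
      exact_mod_cast this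
    have hm0 : (0:ℝ) < (m:ℝ) := lt_of_lt_of_le one_pos hm1
    have h1 := hN₀ m (le_trans (le_max_left _ _) hm)
    rw [Real.norm_eq_abs, Real.norm_eq_abs, abs_of_nonneg (Real.log_nonneg hm1),
      abs_of_nonneg (Real.rpow_nonneg hm0.le ρ)] at h1
    have h2 : ((m:ℝ)^(2:ℝ))⁻¹ = Real.exp (-(2 * Real.log (m:ℝ))) := by
      rw [← Real.log_rpow hm0, Real.exp_neg, Real.exp_log (Real.rpow_pos_of_pos hm0 _)]
    rw [h2, Real.exp_le_exp, neg_le_neg_iff]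
    have h1' : 2 * c * Real.log (m:ℝ) ≤ (m:ℝ)^ρ := by
      have h3 := mul_le_mul_of_nonneg_left h1 (show (0:ℝ) ≤ 2*c by positivity)
      have h4 : 2 * c * (1/(2*c) * (m:ℝ)^ρ) = (m:ℝ)^ρ := by field_simp
      rw [h4] at h3; linarith
    rw [le_div_iff₀ hc]; linarith
  have hg : Summable (fun n : ℕ => (((n:ℕ):ℝ)^(2:ℝ))⁻¹) :=
    Real.summable_nat_rpow_inv.mpr one_lt_two
  have hsm := (summable_nat_add_iff (f := fun n : ℕ => ((n:ℝ)^(2:ℝ))⁻¹) N).mpr hg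
  have hshift : Summable (fun m : ℕ => Real.exp (-(((m + N : ℕ):ℝ)^ρ / c))) := by
    refine Summable.of_nonneg_of_le (fun m => Real.exp_nonneg _) (fun m => ?_) hsm
    exact key (m + N) (Nat.le_add_left N m)
  exact (summable_nat_add_iff (f := fun k : ℕ => Real.exp (-((k:ℝ)^ρ / c))) N).mp hshift


/-- Deterministic inversion: fluctuation control on partial sums yields fluctuation
control on the counting function. -/
lemma det_bound {p : ℝ} (hp0 : 0 < p) (hp1 : p < 1) {B₀ : ℝ} (hB₀ : 1 ≤ B₀)
    {g : ℕ → ℝ} (hg : ∀ k : ℕ, 1 ≤ k → |g k - k| ≤ B₀ * (k:ℝ)^p)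
    (hgpos : ∀ k : ℕ, 1 ≤ k → 0 < g k) :
    ∃ B > (0:ℝ), ∀ x > (0:ℝ),
      x ^ (-p) * |(Set.ncard {k : ℕ | 1 ≤ k ∧ g k ≤ x} : ℝ) - x| ≤ B := by
  set S : ℝ → Set ℕ := fun x => {k : ℕ | 1 ≤ k ∧ g k ≤ x} with hS
  have h1p : (0:ℝ) < 1 - p := by linarith
  set C₁ : ℝ := (2*B₀) ^ (1/(1-p)) with hC₁def
  have h2B : (1:ℝ) ≤ 2*B₀ := by linarith
  have hC₁ : 1 ≤ C₁ := Real.one_le_rpow h2B (by positivity)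
  -- every element of S x is at most max (2x) C₁
  have hkey : ∀ x : ℝ, 0 < x → ∀ k ∈ S x, (k:ℝ) ≤ max (2*x) C₁ := by
    intro x hx k hk
    by_contra hcon
    push_neg at hcon
    have h2x : 2*x < (k:ℝ) := lt_of_le_of_lt (le_max_left _ _) hcon
    have hCk : C₁ < (k:ℝ) := lt_of_le_of_lt (le_max_right _ _) hcon
    have hk0 : (0:ℝ) < (k:ℝ) := lt_of_le_of_lt (by positivity) hCk
    have hCpow : C₁ ^ (1-p) = 2*B₀ := by
      rw [hC₁def, ← Real.rpow_mul (by linarith), one_div, inv_mul_cancel₀ h1p.ne',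
        Real.rpow_one]
    have hkpow : 2*B₀ < (k:ℝ) ^ (1-p) := by
      rw [← hCpow]
      exact Real.rpow_lt_rpow (by positivity) hCk h1p
    have hksplit : (k:ℝ) = (k:ℝ)^(1-p) * (k:ℝ)^p := by
      rw [← Real.rpow_add hk0]; norm_num
    have hkp : (0:ℝ) < (k:ℝ)^p := Real.rpow_pos_of_pos hk0 p
    have hhalf : B₀ * (k:ℝ)^p < (k:ℝ)/2 := by nlinarith
    have hgk := hg k hk.1
    have := hk.2
    rw [abs_le] at hgk
    nlinarith [hgk.1]
  have hfin : ∀ x : ℝ, 0 < x → (S x).Finite := by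
    intro x hx
    refine Set.Finite.subset (Set.finite_Iic (⌊max (2*x) C₁⌋₊ : ℕ)) ?_
    intro k hk
    exact Set.mem_Iic.2 (Nat.le_floor (hkey x hx k hk))
  -- cardinality upper bound via inclusion in Icc
  have hcard : ∀ x : ℝ, ∀ y : ℝ, 0 ≤ y → (∀ k ∈ S x, (k:ℝ) ≤ y) →
      ((S x).ncard : ℝ) ≤ y := by
    intro x y hy hbound
    have hsub : S x ⊆ Set.Icc 1 ⌊y⌋₊ := by
      intro k hk
      exact Set.mem_Icc.2 ⟨hk.1, Nat.le_floor (hbound k hk)⟩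
    have h1 : (S x).ncard ≤ (Set.Icc 1 ⌊y⌋₊).ncard :=
      Set.ncard_le_ncard hsub (Set.finite_Icc _ _)
    have h2 : (Set.Icc (1:ℕ) ⌊y⌋₊).ncard = ⌊y⌋₊ := by
      rw [← Finset.coe_Icc, Set.ncard_coe_finset, Nat.card_Icc]
      omega
    rw [h2] at h1
    calc ((S x).ncard : ℝ) ≤ (⌊y⌋₊ : ℝ) := by exact_mod_cast h1
    _ ≤ y := Nat.floor_le hy
  -- upper estimate
  have hupper : ∀ x : ℝ, 0 < x →
      ((S x).ncard : ℝ) - x ≤ 2*B₀*x^p + B₀*C₁^p := by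
    intro x hx
    have hmax0 : (0:ℝ) ≤ max (2*x) C₁ := le_trans (by linarith) (le_max_right _ _)
    have hy : ((S x).ncard : ℝ) ≤ x + B₀ * (max (2*x) C₁)^p := by
      refine hcard x _ (by positivity) ?_
      intro k hk
      have hgk := hg k hk.1
      rw [abs_le] at hgk
      have hkle : (k:ℝ) ≤ max (2*x) C₁ := hkey x hx k hk
      have hkp : (k:ℝ)^p ≤ (max (2*x) C₁)^p :=
        Real.rpow_le_rpow (by positivity) hkle hp0.le
      nlinarith [hk.2, hgk.2]
    have hmaxp : (max (2*x) C₁)^p ≤ (2*x)^p + C₁^p := by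
      rcases max_cases (2*x) C₁ with ⟨h, _⟩ | ⟨h, _⟩
      · rw [h]; nlinarith [Real.rpow_nonneg (by linarith : (0:ℝ) ≤ C₁) p]
      · rw [h]; nlinarith [Real.rpow_nonneg (by positivity : (0:ℝ) ≤ 2*x) p]
    have h2xp : (2*x)^p ≤ 2 * x^p := by
      rw [Real.mul_rpow (by norm_num) hx.le]
      have : (2:ℝ)^p ≤ 2 := by
        calc (2:ℝ)^p ≤ (2:ℝ)^(1:ℝ) := Real.rpow_le_rpow_of_exponent_le one_le_two hp1.le
        _ = 2 := Real.rpow_one 2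
      nlinarith [Real.rpow_nonneg hx.le p]
    nlinarith [Real.rpow_nonneg hx.le p]
  -- lower estimate
  have hlower : ∀ x : ℝ, 0 < x → x - ((S x).ncard : ℝ) ≤ B₀*x^p + 1 := by
    intro x hx
    have hxp : (0:ℝ) ≤ B₀ * x^p := by positivity
    by_cases hneg : x - B₀*x^p < 0
    · have : (0:ℝ) ≤ ((S x).ncard : ℝ) := by positivity
      linarith
    · push_neg at hneg
      set n := ⌊x - B₀*x^p⌋₊ with hn
      have hnle : (n:ℝ) ≤ x - B₀*x^p := Nat.floor_le (by linarith)
      have hsub : Set.Icc 1 n ⊆ S x := by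
        intro k hk
        rw [Set.mem_Icc] at hk
        have hk1 := hk.1
        have hkx : (k:ℝ) ≤ x := by
          have : (k:ℝ) ≤ (n:ℝ) := by exact_mod_cast hk.2
          linarith
        have hkp : (k:ℝ)^p ≤ x^p := Real.rpow_le_rpow (by positivity) hkx hp0.le
        have hgk := hg k hk.1
        rw [abs_le] at hgk
        constructor
        · exact hk.1
        · have : (k:ℝ) ≤ (n:ℝ) := by exact_mod_cast hk.2
          nlinarith [hgk.2]
      have hge : n ≤ (S x).ncard := by
        have h5 := Set.ncard_le_ncard hsub (hfin x hx)
        rw [← Finset.coe_Icc, Set.ncard_coe_finset, Nat.card_Icc] at h5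
        omega
      have hflo : x - B₀*x^p < (n:ℝ) + 1 := Nat.lt_floor_add_one _
      have : (n:ℝ) ≤ ((S x).ncard : ℝ) := by exact_mod_cast hge
      linarith
  set C₃ : ℝ := 2*B₀ + B₀*C₁^p + 1 with hC₃def
  have hC₁p : (0:ℝ) ≤ B₀*C₁^p := by positivity
  have hC₃ : 1 ≤ C₃ := by linarith
  have habs : ∀ x : ℝ, 0 < x →
      |((S x).ncard : ℝ) - x| ≤ C₃ * (x^p + 1) := by
    intro x hx
    have hxp : (0:ℝ) ≤ x^p := Real.rpow_nonneg hx.le p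
    rw [abs_le]
    constructor
    · have := hlower x hx
      nlinarith
    · have := hupper x hx
      nlinarith
  -- the small-x correction term
  set T : Set ℕ := S 1 with hT
  have hTfin : T.Finite := hfin 1 one_pos
  set F := hTfin.toFinset with hF
  set C₄ : ℝ := (∑ k ∈ F, (g k)^(-p)) * ((T.ncard : ℝ) + 1) with hC₄def
  have hsum0 : (0:ℝ) ≤ ∑ k ∈ F, (g k)^(-p) :=
    Finset.sum_nonneg fun k _ => Real.rpow_nonneg
      (hgpos k ((hTfin.mem_toFinset.mp ‹k ∈ F›).1)).le _
  have hC₄ : 0 ≤ C₄ := by positivity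
  refine ⟨2*C₃ + 1 + C₄, by linarith, ?_⟩
  intro x hx
  show x ^ (-p) * |((S x).ncard : ℝ) - x| ≤ 2*C₃ + 1 + C₄
  have hxnp : (0:ℝ) ≤ x^(-p) := Real.rpow_nonneg hx.le _
  by_cases hx1 : 1 ≤ x
  · have h1 := mul_le_mul_of_nonneg_left (habs x hx) hxnp
    have hxx : x ^ (-p) * x ^ p = 1 := by
      rw [← Real.rpow_add hx]; norm_num
    have hle1 : x ^ (-p) ≤ 1 :=
      Real.rpow_le_one_of_one_le_of_nonpos hx1 (by linarith)
    nlinarith [h1]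
  · push_neg at hx1
    rcases Set.eq_empty_or_nonempty (S x) with hemp | ⟨k₀, hk₀⟩
    · rw [hemp]
      simp only [Set.ncard_empty, Nat.cast_zero, zero_sub, abs_neg, abs_of_pos hx]
      have : x ^ (-p) * x = x ^ (1-p) := by
        nth_rewrite 2 [← Real.rpow_one x]
        rw [← Real.rpow_add hx]; ring_nf
      rw [this]
      have : x ^ (1-p) ≤ 1 := Real.rpow_le_one hx.le hx1.le (by linarith)
      linarith
    · have hk₀T : k₀ ∈ T := ⟨hk₀.1, le_trans hk₀.2 hx1.le⟩
      have hk₀F : k₀ ∈ F := hTfin.mem_toFinset.mpr hk₀T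
      have hgk₀ : 0 < g k₀ := hgpos k₀ hk₀.1
      have hxg : x ^ (-p) ≤ (g k₀) ^ (-p) :=
        Real.rpow_le_rpow_of_nonpos hgk₀ hk₀.2 (by linarith)
      have hsub : S x ⊆ T := fun k hk => ⟨hk.1, le_trans hk.2 hx1.le⟩
      have hncard : (S x).ncard ≤ T.ncard := Set.ncard_le_ncard hsub hTfin
      have hD : |((S x).ncard : ℝ) - x| ≤ (T.ncard : ℝ) + 1 := by
        have h0 : (0:ℝ) ≤ ((S x).ncard : ℝ) := Nat.cast_nonneg _
        have hc : ((S x).ncard : ℝ) ≤ (T.ncard : ℝ) := Nat.cast_le.mpr hncard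
        rw [abs_le]
        exact ⟨by linarith, by linarith⟩
      have hsingle : (g k₀)^(-p) ≤ ∑ k ∈ F, (g k)^(-p) :=
        Finset.single_le_sum (fun k hk => Real.rpow_nonneg
          (hgpos k ((hTfin.mem_toFinset.mp hk).1)).le _) hk₀F
      have hstep : x ^ (-p) * |((S x).ncard : ℝ) - x| ≤ (g k₀)^(-p) * ((T.ncard : ℝ) + 1) :=
        mul_le_mul hxg hD (abs_nonneg _) (Real.rpow_nonneg hgk₀.le _)
      have hstep2 : (g k₀)^(-p) * ((T.ncard : ℝ) + 1) ≤ C₄ :=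
        mul_le_mul_of_nonneg_right hsingle (by positivity)
      linarith



lemma expMeasure_Iic_zero : expMeasure 1 (Set.Iic (0:ℝ)) = 0 := by
  have h : expMeasure 1 (Set.Iic (0:ℝ)) = ∫⁻ y in Set.Iic (0:ℝ), exponentialPDF 1 y := by
    rw [show expMeasure 1 = MeasureTheory.volume.withDensity (exponentialPDF 1) from rfl,
      withDensity_apply _ measurableSet_Iic]
  rw [h, lintegral_exponentialPDF_eq_antiDeriv one_pos 0]
  norm_num

theorem main
    (ξ : ℕ → Ω → ℝ) (hmeas : ∀ j, Measurable (ξ j))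
    (hindep : iIndepFun ξ μ)
    (hexp : ∀ j, Measure.map (ξ j) μ = expMeasure 1)
    (δ : ℝ) (hδ : 0 < δ) (hδ' : δ < 1 / 2) (ε : ℝ) (hε : 0 < ε) :
    ∃ B > (0 : ℝ),
      1 - ENNReal.ofReal ε ≤
        μ {ω | ∀ x > (0 : ℝ),
          x ^ (-(1 / 2 + δ)) *
            |(Set.ncard {k : ℕ | 1 ≤ k ∧ ∑ j ∈ Finset.range k, ξ j ω ≤ x} : ℝ) - x| ≤ B} := by
  set p : ℝ := 1 / 2 + δ with hpdef
  have hp0 : 0 < p := by rw [hpdef]; linarith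
  have hp1 : p < 1 := by rw [hpdef]; linarith
  have hphalf : 1/2 < p := by rw [hpdef]; linarith
  -- a.s. positivity of each ξ j
  have hpos_j : ∀ j, ∀ᵐ ω ∂μ, 0 < ξ j ω := by
    intro j
    rw [ae_iff]
    have hset : {ω | ¬ 0 < ξ j ω} = (ξ j) ⁻¹' (Set.Iic 0) := by
      ext ω; simp [not_lt]
    rw [hset, ← Measure.map_apply (hmeas j) measurableSet_Iic, hexp j, expMeasure_Iic_zero]
  -- Borel-Cantelli
  set s : ℕ → Set Ω :=
    fun k => {ω | ¬ |(∑ j ∈ Finset.range k, ξ j ω) - (k:ℝ)| ≤ (k:ℝ)^p} with hsdef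
  set f : ℕ → ℝ := fun k => 2 * Real.exp (-(((k:ℝ)^p)^2/(8*(k:ℝ)))) with hfdef
  have hb : ∀ k, μ (s k) ≤ ENNReal.ofReal (f k) := by
    intro k
    rcases Nat.eq_zero_or_pos k with rfl | hk
    · have hf0 : f 0 = 2 := by
        rw [hfdef]
        norm_num [Real.zero_rpow hp0.ne']
      rw [hf0]
      calc μ (s 0) ≤ 1 := prob_le_one
      _ ≤ ENNReal.ofReal 2 := by norm_num [ENNReal.ofReal]
    · exact tail_bound hmeas hindep hexp hp1.le hk
  have hf_nonneg : ∀ k, 0 ≤ f k := fun k => by positivity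
  have hf_sum : Summable f := by
    have h8 : (0:ℝ) < 8 := by norm_num
    have hsum := (summable_tail (show (0:ℝ) < 2*p - 1 by rw [hpdef]; linarith) h8).mul_left 2
    refine hsum.congr fun k => ?_
    rcases Nat.eq_zero_or_pos k with rfl | hk
    · have hne : 2*p - 1 ≠ 0 := by rw [hpdef]; intro h; linarith
      norm_num [hfdef, Real.zero_rpow hp0.ne', Real.zero_rpow hne]
    · have hk0 : (0:ℝ) < (k:ℝ) := by exact_mod_cast hk
      have harg : (k:ℝ) ^ (2*p - 1) / 8 = ((k:ℝ)^p)^2 / (8*(k:ℝ)) := by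
        rw [show (2*p - 1) = p * 2 - 1 by ring, Real.rpow_sub hk0, Real.rpow_one,
          ← Real.rpow_natCast ((k:ℝ)^p) 2, ← Real.rpow_mul hk0.le]
        push_cast
        rw [div_div]
        ring_nf
      simp only [hfdef]
      rw [harg]
  have hsum_ne_top : (∑' k, μ (s k)) ≠ ⊤ := by
    have h1 : (∑' k, μ (s k)) ≤ ∑' k, ENNReal.ofReal (f k) := ENNReal.tsum_le_tsum hb
    rw [← ENNReal.ofReal_tsum_of_nonneg hf_nonneg hf_sum] at h1
    exact ne_top_of_le_ne_top ENNReal.ofReal_ne_top h1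
  have hBC : ∀ᵐ ω ∂μ, {k | ω ∈ s k}.Finite := ae_finite_setOf_mem hsum_ne_top
  have hae : ∀ᵐ ω ∂μ, (∀ j, 0 < ξ j ω) ∧ {k | ω ∈ s k}.Finite :=
    (ae_all_iff.mpr hpos_j).and hBC
  -- the good event is a.s. contained in the union of the E n
  set E : ℕ → Set Ω := fun n => {ω | ∀ x > (0 : ℝ),
    x ^ (-(1 / 2 + δ)) *
      |(Set.ncard {k : ℕ | 1 ≤ k ∧ ∑ j ∈ Finset.range k, ξ j ω ≤ x} : ℝ) - x| ≤ (n:ℝ)+1}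
    with hEdef
  have hmono : Monotone E := by
    intro m n hmn ω hω x hx
    have hc : ((m:ℝ)+1) ≤ ((n:ℝ)+1) := by
      have : (m:ℝ) ≤ (n:ℝ) := by exact_mod_cast hmn
      linarith
    exact le_trans (hω x hx) hc
  have hunion : ∀ᵐ ω ∂μ, ω ∈ ⋃ n, E n := by
    filter_upwards [hae] with ω hω
    obtain ⟨hpos, hfinbad⟩ := hω
    set g : ℕ → ℝ := fun k => ∑ j ∈ Finset.range k, ξ j ω with hgdef
    set F := hfinbad.toFinset with hFdef
    set B₀ : ℝ := 1 + ∑ k ∈ F, |g k - (k:ℝ)| with hB₀def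
    have hsum_nonneg : (0:ℝ) ≤ ∑ k ∈ F, |g k - (k:ℝ)| :=
      Finset.sum_nonneg fun k _ => abs_nonneg _
    have hB₀1 : 1 ≤ B₀ := by rw [hB₀def]; linarith
    have hg : ∀ k : ℕ, 1 ≤ k → |g k - (k:ℝ)| ≤ B₀ * (k:ℝ)^p := by
      intro k hk
      have hk1 : (1:ℝ) ≤ (k:ℝ) := by exact_mod_cast hk
      have hkp1 : (1:ℝ) ≤ (k:ℝ)^p := Real.one_le_rpow hk1 hp0.le
      by_cases hmem : ω ∈ s k
      · have hkF : k ∈ F := hfinbad.mem_toFinset.mpr hmem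
        have h1 : |g k - (k:ℝ)| ≤ ∑ i ∈ F, |g i - (i:ℝ)| :=
          Finset.single_le_sum (f := fun i => |g i - (i:ℝ)|) (fun i _ => abs_nonneg _) hkF
        nlinarith
      · have h1 : |g k - (k:ℝ)| ≤ (k:ℝ)^p := not_not.mp hmem
        nlinarith
    have hgpos : ∀ k : ℕ, 1 ≤ k → 0 < g k := by
      intro k hk
      refine Finset.sum_pos (fun j _ => hpos j) ?_
      exact Finset.nonempty_range_iff.mpr (by omega)
    obtain ⟨B, hB, hBbound⟩ := det_bound hp0 hp1 hB₀1 hg hgpos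
    refine Set.mem_iUnion.mpr ⟨⌈B⌉₊, ?_⟩
    intro x hx
    refine le_trans (hBbound x hx) ?_
    calc B ≤ (⌈B⌉₊ : ℝ) := Nat.le_ceil B
    _ ≤ (⌈B⌉₊ : ℝ) + 1 := by linarith
  have h1 : (1:ℝ≥0∞) ≤ μ (⋃ n, E n) := by
    have hc : μ (⋃ n, E n)ᶜ = 0 := by
      rw [ae_iff] at hunion
      exact hunion
    have := measure_union_le (μ := μ) (⋃ n, E n) (⋃ n, E n)ᶜ
    rw [Set.union_compl_self, measure_univ, hc, add_zero] at this
    exact this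
  rw [hmono.measure_iUnion] at h1
  have hlt : 1 - ENNReal.ofReal ε < 1 :=
    ENNReal.sub_lt_self ENNReal.one_ne_top one_ne_zero
      (ne_of_gt (ENNReal.ofReal_pos.mpr hε))
  obtain ⟨n, hn⟩ := lt_iSup_iff.mp (lt_of_lt_of_le hlt h1)
  exact ⟨(n:ℝ)+1, by positivity, le_of_lt hn⟩


end PoissonFluct

/-- Fluctuation bound for the counting function of a standard homogeneous Poisson process:
if `ξ₁, ξ₂, …` are i.i.d. rate-1 exponential random variables with partial sums
`Γ_k = ξ₁ + … + ξ_k`, and `0 < δ < 1/2`, then for every `ε > 0` there is `B > 0` such that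
with probability at least `1 - ε`,
`sup_{x > 0} x^{-(1/2+δ)} |#{k ≥ 1 : Γ_k ≤ x} - x| ≤ B`. -/
theorem poisson_counting_fluctuation
    {Ω : Type*} [MeasurableSpace Ω] (μ : Measure Ω) [IsProbabilityMeasure μ]
    (ξ : ℕ → Ω → ℝ) (hmeas : ∀ j, Measurable (ξ j))
    (hindep : iIndepFun ξ μ)
    (hexp : ∀ j, Measure.map (ξ j) μ = expMeasure 1)
    (δ : ℝ) (hδ : 0 < δ) (hδ' : δ < 1 / 2) (ε : ℝ) (hε : 0 < ε) :
    ∃ B > (0 : ℝ),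
      1 - ENNReal.ofReal ε ≤
        μ {ω | ∀ x > (0 : ℝ),
          x ^ (-(1 / 2 + δ)) *
            |(Set.ncard {k : ℕ | 1 ≤ k ∧ ∑ j ∈ Finset.range k, ξ j ω ≤ x} : ℝ) - x| ≤ B} := by
  exact PoissonFluct.main (μ := μ) ξ hmeas hindep hexp δ hδ hδ' ε hε

end
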